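/- Fix an integer n ≥ 1. Suppose (F_g)_{g≥0} is a sequence of formal power series in ℚ⟦t⟧ such that: the constant coefficient of F₀ equals 1; t·F₀′ = 12n·G·F₀; and F_g = t·G′·F_{g−1} for every g ≥ 1. Then F_g = (t·G′)^g · P_{12n} for every g ≥ 0; in particular F₀ = P_{12n}, i.e. F₀ is the infinite product ∏_{d≥1}(1 − t^d)^{−12n}. -/

import Mathlib

open PowerSeries

/-- `σ d` is the sum of the positive divisors of `d`. -/
def sigmaFun (d : ℕ) : ℕ := ∑ k ∈ Nat.divisors d, k

/-- The generating series `G = ∑_{d ≥ 1} σ(d) t^d` in `ℚ⟦t⟧`. -/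
noncomputable def Gser : PowerSeries ℚ :=
  PowerSeries.mk fun d => if d = 0 then 0 else (sigmaFun d : ℚ)

/-- The partial product `∏_{d=1}^{N} (1 - t^d)^{-m}` in `ℚ⟦t⟧`. -/
noncomputable def partialProd (m N : ℕ) : PowerSeries ℚ :=
  ∏ d ∈ Finset.Icc 1 N, ((1 - (PowerSeries.X : PowerSeries ℚ) ^ d)⁻¹) ^ m

/-- The infinite product `∏_{d ≥ 1} (1 - t^d)^{-m}`, defined coefficientwise via the
stabilizing coefficients of the partial products. -/
noncomputable def Pser (m : ℕ) : PowerSeries ℚ :=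
  PowerSeries.mk fun k => PowerSeries.coeff k (partialProd m k)

/-! ### Auxiliary development -/

noncomputable def uu (d : ℕ) : PowerSeries ℚ := (1 - (X : PowerSeries ℚ) ^ d)⁻¹

lemma cc_one_sub {d : ℕ} (hd : 1 ≤ d) :
    constantCoeff (1 - (X : PowerSeries ℚ) ^ d) = 1 := by
  have : d ≠ 0 := by omega
  simp [zero_pow this]

lemma dvd_sub_self_iff {d k : ℕ} (h : d ≤ k) : d ∣ k ↔ d ∣ k - d := by
  constructor
  · exact fun hh => Nat.dvd_sub hh dvd_rfl
  · intro hh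
    have := Nat.dvd_add hh (dvd_refl d)
    rwa [Nat.sub_add_cancel h] at this

lemma uu_eq {d : ℕ} (hd : 1 ≤ d) :
    uu d = PowerSeries.mk (fun j => if d ∣ j then (1:ℚ) else 0) := by
  rw [uu, inv_eq_iff_mul_eq_one (by rw [cc_one_sub hd]; norm_num)]
  ext k
  rw [mul_sub, mul_one, map_sub, coeff_mul_X_pow', coeff_mk, coeff_one]
  rcases Nat.eq_zero_or_pos k with hk | hk
  · subst hk
    have h1 : ¬ d ≤ 0 := by omega
    simp [h1]
  · by_cases hdk : d ≤ k
    · rw [if_pos hdk, coeff_mk]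
      by_cases h1 : d ∣ k
      · rw [if_pos h1, if_pos ((dvd_sub_self_iff hdk).mp h1), if_neg (by omega : ¬ k = 0)]
        ring
      · rw [if_neg h1, if_neg (fun hc => h1 ((dvd_sub_self_iff hdk).mpr hc)),
          if_neg (by omega : ¬ k = 0)]
        ring
    · rw [if_neg hdk, if_neg (fun h => hdk (Nat.le_of_dvd hk h)),
        if_neg (by omega : ¬ k = 0)]
      ring

lemma coeff_uu {d : ℕ} (hd : 1 ≤ d) (j : ℕ) :
    coeff j (uu d) = if d ∣ j then 1 else 0 := by
  rw [uu_eq hd, coeff_mk]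

lemma deriv_uu {d : ℕ} (hd : 1 ≤ d) :
    d⁄dX ℚ (uu d) = (d : PowerSeries ℚ) * X ^ (d-1) * uu d ^ 2 := by
  rw [uu, derivative_inv', map_sub, Derivation.leibniz_pow, derivative_X,
    Derivation.map_one_eq_zero]
  simp only [smul_eq_mul, mul_one, nsmul_eq_mul]
  ring

lemma X_mul_deriv_uu_pow {d m : ℕ} (hd : 1 ≤ d) (hm : 1 ≤ m) :
    X * d⁄dX ℚ (uu d ^ m)
      = (m : PowerSeries ℚ) * (d : PowerSeries ℚ) * X ^ d * uu d * uu d ^ m := by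
  rw [Derivation.leibniz_pow, deriv_uu hd]
  simp only [smul_eq_mul, nsmul_eq_mul]
  have h1 : (X : PowerSeries ℚ) ^ d = X * X ^ (d-1) := by
    rw [← pow_succ']; congr 1; omega
  have h2 : uu d ^ m = uu d ^ (m-1) * uu d := by
    rw [← pow_succ]; congr 1; omega
  rw [h1, h2]; ring

noncomputable def Hser (m N : ℕ) : PowerSeries ℚ :=
  ∑ d ∈ Finset.Icc 1 N, (m : PowerSeries ℚ) * (d : PowerSeries ℚ) * X ^ d * uu d

lemma partialProd_eq (m N : ℕ) :
    partialProd m N = ∏ d ∈ Finset.Icc 1 N, uu d ^ m := rfl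

lemma X_mul_deriv_partialProd (m : ℕ) (hm : 1 ≤ m) (N : ℕ) :
    X * d⁄dX ℚ (partialProd m N) = Hser m N * partialProd m N := by
  induction N with
  | zero => simp [partialProd, Hser]
  | succ N ih =>
    have hp : partialProd m (N+1) = partialProd m N * uu (N+1) ^ m := by
      rw [partialProd_eq, Finset.prod_Icc_succ_top (by omega), ← partialProd_eq]
    have hH : Hser m (N+1) = Hser m N
        + (m : PowerSeries ℚ) * ((N:PowerSeries ℚ)+1) * X ^ (N+1) * uu (N+1) := by
      rw [Hser, Finset.sum_Icc_succ_top (by omega), ← Hser]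
      push_cast
      ring
    have key := X_mul_deriv_uu_pow (d := N+1) (m := m) (by omega) hm
    rw [hp, hH, Derivation.leibniz]
    simp only [smul_eq_mul]
    push_cast at key ⊢
    linear_combination (partialProd m N) * key + (uu (N+1) ^ m) * ih

lemma coeff_Hser_term {m d j : ℕ} (hd : 1 ≤ d) :
    coeff j ((m : PowerSeries ℚ) * (d : PowerSeries ℚ) * X ^ d * uu d)
      = if d ∈ Nat.divisors j then (m : ℚ) * (d : ℚ) else 0 := by
  have hcast : (m : PowerSeries ℚ) * (d : PowerSeries ℚ) * X ^ d * uu d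
      = C ((m : ℚ) * (d : ℚ)) * (uu d * X ^ d) := by
    rw [map_mul, map_natCast, map_natCast]; ring
  rw [hcast, coeff_C_mul, coeff_mul_X_pow']
  by_cases hdj : d ≤ j
  · rw [if_pos hdj, coeff_uu hd]
    by_cases h1 : d ∣ j - d
    · rw [if_pos h1, if_pos (by
        rw [Nat.mem_divisors]
        exact ⟨(dvd_sub_self_iff hdj).mpr h1, by omega⟩)]
      ring
    · rw [if_neg h1, if_neg (by
        rw [Nat.mem_divisors]
        rintro ⟨h2, -⟩
        exact h1 ((dvd_sub_self_iff hdj).mp h2))]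
      ring
  · rw [if_neg hdj, if_neg (by
      rw [Nat.mem_divisors]
      rintro ⟨h2, h3⟩
      exact hdj (Nat.le_of_dvd (by omega) h2))]
    ring

lemma coeff_Hser {m N j : ℕ} (h1 : 1 ≤ j) (hjN : j ≤ N) :
    coeff j (Hser m N) = (m : ℚ) * (sigmaFun j : ℚ) := by
  rw [Hser, map_sum]
  rw [Finset.sum_congr rfl (fun d hd =>
    coeff_Hser_term (m := m) (j := j) (Finset.mem_Icc.mp hd).1)]
  rw [← Finset.sum_filter]
  have hset : (Finset.Icc 1 N).filter (fun d => d ∈ Nat.divisors j) = Nat.divisors j := by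
    ext d
    simp only [Finset.mem_filter, Finset.mem_Icc, Nat.mem_divisors]
    constructor
    · tauto
    · rintro ⟨h2, h3⟩
      refine ⟨⟨?_, ?_⟩, h2, h3⟩
      · have := Nat.pos_of_dvd_of_pos h2 (by omega)
        omega
      · exact le_trans (Nat.le_of_dvd (by omega) h2) hjN
  rw [hset, sigmaFun]; push_cast [Finset.mul_sum]; rfl

lemma coeff_Hser_zero (m N : ℕ) : coeff 0 (Hser m N) = 0 := by
  rw [Hser, map_sum]
  apply Finset.sum_eq_zero
  intro d hd
  rw [coeff_Hser_term (Finset.mem_Icc.mp hd).1, if_neg (by simp)]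

def lowOne (A : PowerSeries ℚ) (k : ℕ) : Prop :=
  coeff 0 A = 1 ∧ ∀ j, 1 ≤ j → j ≤ k → coeff j A = 0

lemma lowOne_coeff_mul {A B : PowerSeries ℚ} {k : ℕ} (hB : lowOne B k) {i : ℕ} (hik : i ≤ k) :
    coeff i (A * B) = coeff i A := by
  rw [coeff_mul, Finset.sum_eq_single (i, 0)]
  · rw [hB.1, mul_one]
  · intro b hb hne
    rw [Finset.HasAntidiagonal.mem_antidiagonal] at hb
    have hb2 : b.2 ≠ 0 := by
      intro h
      exact hne (by rw [Prod.ext_iff]; omega)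
    rw [hB.2 b.2 (by omega) (by omega), mul_zero]
  · intro h
    exact absurd (by simp) h

lemma lowOne_one (k : ℕ) : lowOne 1 k :=
  ⟨by simp, fun j h1 _ => by rw [coeff_one, if_neg (by omega)]⟩

lemma lowOne_mul {A B : PowerSeries ℚ} {k : ℕ} (hA : lowOne A k) (hB : lowOne B k) :
    lowOne (A * B) k :=
  ⟨by rw [lowOne_coeff_mul hB (Nat.zero_le k)]; exact hA.1,
   fun j h1 h2 => by rw [lowOne_coeff_mul hB h2, hA.2 j h1 h2]⟩

lemma lowOne_uu {d k : ℕ} (hk : k < d) : lowOne (uu d) k := by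
  refine ⟨by rw [coeff_uu (by omega), if_pos (dvd_zero d)], fun j h1 h2 => ?_⟩
  rw [coeff_uu (by omega), if_neg (fun h => by have := Nat.le_of_dvd (by omega) h; omega)]

lemma lowOne_uu_pow {d k m : ℕ} (hk : k < d) : lowOne (uu d ^ m) k := by
  induction m with
  | zero => simpa using lowOne_one k
  | succ m ih => rw [pow_succ]; exact lowOne_mul ih (lowOne_uu hk)

lemma coeff_partialProd_stable {m i N M : ℕ} (hiN : i ≤ N) (hNM : N ≤ M) :
    coeff i (partialProd m M) = coeff i (partialProd m N) := by
  have hIcc : ∀ K : ℕ, Finset.Icc 1 K = Finset.Ioc 0 K := by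
    intro K; ext x; simp only [Finset.mem_Icc, Finset.mem_Ioc]; omega
  have hsplit : partialProd m M = partialProd m N * ∏ d ∈ Finset.Ioc N M, uu d ^ m := by
    rw [partialProd_eq, partialProd_eq, hIcc, hIcc,
      ← Finset.prod_Ioc_consecutive _ (Nat.zero_le N) hNM]
  rw [hsplit, lowOne_coeff_mul ?_ hiN]
  apply Finset.prod_induction _ (fun A => lowOne A N) (fun _ _ => lowOne_mul) (lowOne_one N)
  intro d hd
  exact lowOne_uu_pow (Finset.mem_Ioc.mp hd).1

lemma coeff_Pser (m : ℕ) {i N : ℕ} (hiN : i ≤ N) :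
    coeff i (Pser m) = coeff i (partialProd m N) := by
  rw [Pser, coeff_mk, coeff_partialProd_stable (le_refl i) hiN]

lemma coeff_Gser (j : ℕ) :
    coeff j Gser = if j = 0 then 0 else (sigmaFun j : ℚ) := by
  rw [Gser, coeff_mk]

lemma Pser_rec (m : ℕ) (hm : 1 ≤ m) (K : ℕ) (hK : 1 ≤ K) :
    (K : ℚ) * coeff K (Pser m) = (m : ℚ) * coeff K (Gser * Pser m) := by
  have h3 := congrArg (coeff K) (X_mul_deriv_partialProd m hm K)
  have hL : coeff K (X * d⁄dX ℚ (partialProd m K))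
      = (K : ℚ) * coeff K (partialProd m K) := by
    obtain ⟨k, rfl⟩ : ∃ k, K = k + 1 := ⟨K - 1, by omega⟩
    rw [coeff_succ_X_mul, coeff_derivative]
    push_cast
    ring
  have hR : coeff K (Hser m K * partialProd m K)
      = (m : ℚ) * coeff K (Gser * Pser m) := by
    rw [coeff_mul, coeff_mul, Finset.mul_sum]
    apply Finset.sum_congr rfl
    intro pq hpq
    rw [Finset.HasAntidiagonal.mem_antidiagonal] at hpq
    have hq : coeff pq.2 (partialProd m K) = coeff pq.2 (Pser m) :=
      (coeff_Pser m (by omega)).symm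
    have hp : coeff pq.1 (Hser m K) = (m : ℚ) * coeff pq.1 Gser := by
      rcases Nat.eq_zero_or_pos pq.1 with h | h
      · rw [h, coeff_Hser_zero, coeff_Gser, if_pos rfl, mul_zero]
      · rw [coeff_Hser h (by omega), coeff_Gser, if_neg (by omega)]
    rw [hp, hq]
    ring
  rw [coeff_Pser m (le_refl K), ← hL, h3, hR]

lemma constantCoeff_Pser (m : ℕ) : coeff 0 (Pser m) = 1 := by
  rw [Pser, coeff_mk, partialProd]
  simp

lemma ODE_unique (c : ℚ) (A B : PowerSeries ℚ)
    (hA0 : coeff 0 A = 1) (hB0 : coeff 0 B = 1)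
    (hA : ∀ K : ℕ, 1 ≤ K → (K : ℚ) * coeff K A = c * coeff K (Gser * A))
    (hB : ∀ K : ℕ, 1 ≤ K → (K : ℚ) * coeff K B = c * coeff K (Gser * B)) :
    A = B := by
  ext K
  induction K using Nat.strong_induction_on with
  | _ K ih =>
    match K with
    | 0 => rw [hA0, hB0]
    | K + 1 =>
      have h1 := hA (K+1) (by omega)
      have h2 := hB (K+1) (by omega)
      have hGAB : coeff (K+1) (Gser * A) = coeff (K+1) (Gser * B) := by
        rw [coeff_mul, coeff_mul]
        apply Finset.sum_congr rfl
        intro pq hpq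
        rw [Finset.HasAntidiagonal.mem_antidiagonal] at hpq
        rcases eq_or_lt_of_le (show pq.2 ≤ K + 1 by omega) with h | h
        · have hp1 : pq.1 = 0 := by omega
          rw [hp1, coeff_Gser, if_pos rfl, zero_mul, zero_mul]
        · rw [ih pq.2 h]
      have hKne : ((K : ℚ) + 1) ≠ 0 := by positivity
      have heq : ((K : ℚ) + 1) * coeff (K+1) A = ((K : ℚ) + 1) * coeff (K+1) B := by
        push_cast at h1 h2
        rw [h1, hGAB, ← h2]
      exact mul_left_cancel₀ hKne heq

theorem Fg_eq_tGprime_pow_mul_P (n : ℕ) (hn : 1 ≤ n) (F : ℕ → PowerSeries ℚ)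
    (h0 : PowerSeries.constantCoeff (F 0) = 1)
    (hODE : (PowerSeries.X : PowerSeries ℚ) * PowerSeries.derivative ℚ (F 0)
      = (12 * n : PowerSeries ℚ) * Gser * F 0)
    (hrec : ∀ g : ℕ, 1 ≤ g →
      F g = (PowerSeries.X : PowerSeries ℚ) * PowerSeries.derivative ℚ Gser * F (g - 1)) :
    (∀ g : ℕ, F g =
      ((PowerSeries.X : PowerSeries ℚ) * PowerSeries.derivative ℚ Gser) ^ g * Pser (12 * n))
    ∧ F 0 = Pser (12 * n) := by
  have hm : 1 ≤ 12 * n := by omega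
  have hcast : ((12 * n : ℕ) : PowerSeries ℚ) = (12 * n : PowerSeries ℚ) := by push_cast; ring
  have hF0 : F 0 = Pser (12 * n) := by
    apply ODE_unique ((12 * n : ℕ) : ℚ)
    · rw [coeff_zero_eq_constantCoeff]; exact h0
    · exact constantCoeff_Pser _
    · intro K hK
      have h3 := congrArg (coeff K) hODE
      obtain ⟨k, rfl⟩ : ∃ k, K = k + 1 := ⟨K - 1, by omega⟩
      rw [coeff_succ_X_mul, coeff_derivative] at h3
      have h4 : (12 * n : PowerSeries ℚ) * Gser * F 0
          = C ((12 * n : ℕ) : ℚ) * (Gser * F 0) := by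
        rw [map_natCast, hcast]; ring
      rw [h4, coeff_C_mul] at h3
      push_cast at h3 ⊢
      linear_combination h3
    · intro K hK
      have := Pser_rec (12 * n) hm K hK
      push_cast at this ⊢
      linear_combination this
  refine ⟨?_, hF0⟩
  intro g
  induction g with
  | zero => rw [pow_zero, one_mul]; exact hF0
  | succ g ih =>
    rw [hrec (g+1) (by omega), Nat.add_sub_cancel, ih, pow_succ]
    ring
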